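/- Let n ≥ 3 be an odd integer, let m ≥ 2 be an integer, and let x, y be integers with y ≥ 1 satisfying x^n − m·y^n = 1 or x^n − m·y^n = −1. Then |m^{1/n} − x/y| ≤ 1/(c₁·y^n), where c₁ = m^{(n−1)/n}·c₂ and c₂ = ∏_{j=1}^{n−1} |sin(2πj/n)|. -/

import Mathlib

open Finset

/-- The sine product `c₂` is positive for odd `n`. -/
lemma c2_pos (n : ℕ) (hn : 3 ≤ n) (hodd : Odd n) :
    0 < ∏ j ∈ Finset.Icc 1 (n - 1), |Real.sin (2 * Real.pi * (j : ℝ) / n)| := by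
  apply Finset.prod_pos
  intro j hj
  simp only [Finset.mem_Icc] at hj
  rw [abs_pos]
  intro hs
  rw [Real.sin_eq_zero_iff] at hs
  obtain ⟨k, hk⟩ := hs
  have hn0 : (n : ℝ) ≠ 0 := by positivity
  have hpi : Real.pi ≠ 0 := Real.pi_ne_zero
  field_simp at hk
  have h2 : ((k * n : ℤ) : ℝ) * Real.pi = ((2 * j : ℤ) : ℝ) * Real.pi := by
    push_cast
    linear_combination Real.pi * hk
  have h2' : (k : ℤ) * n = 2 * j := by exact_mod_cast mul_right_cancel₀ hpi h2
  have hdvd : (n : ℤ) ∣ 2 * j := ⟨k, by linarith [h2']⟩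
  obtain ⟨t, ht⟩ := hdvd
  have hj1 : 1 ≤ j := hj.1
  have hj2 : j ≤ n - 1 := hj.2
  rcases Int.even_or_odd t with ⟨u, hu⟩ | ⟨u, hu⟩
  · have hj' : (j:ℤ) = n * u := by subst hu; linarith [ht]
    have hle : (n:ℤ) ≤ (j:ℤ) := Int.le_of_dvd (by exact_mod_cast hj1) ⟨u, hj'⟩
    have : n ≤ j := by exact_mod_cast hle
    omega
  · rcases hodd with ⟨s, hs⟩
    have hns : (n:ℤ) = 2*(s:ℤ)+1 := by exact_mod_cast hs
    have hwt : 2*(j:ℤ) = 2*((n:ℤ)*u) + (n:ℤ) := by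
      subst hu; linear_combination ht
    omega

/-- For an odd integer `n ≥ 3`, an integer `m ≥ 2`, and integers
`x, y` with `y ≥ 1` satisfying `x^n − m·y^n = ±1`, one has
`|m^{1/n} − x/y| ≤ 1/(c₁·y^n)` with `c₁ = m^{(n−1)/n}·∏_{j=1}^{n−1}|sin(2πj/n)|`. -/
theorem stmt_2 (n : ℕ) (hn : 3 ≤ n) (hodd : Odd n) (m : ℤ) (hm : 2 ≤ m)
    (x y : ℤ) (hy : 1 ≤ y)
    (h : x ^ n - m * y ^ n = 1 ∨ x ^ n - m * y ^ n = -1) :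
    |(m : ℝ) ^ ((1 : ℝ) / n) - (x : ℝ) / (y : ℝ)| ≤
      1 / (((m : ℝ) ^ (((n : ℝ) - 1) / n) *
        ∏ j ∈ Finset.Icc 1 (n - 1), |Real.sin (2 * Real.pi * (j : ℝ) / n)|) *
        (y : ℝ) ^ n) := by
  have hnne : n ≠ 0 := by omega
  have hn0 : (0:ℝ) < n := by positivity
  have hm0 : (0:ℝ) < (m:ℝ) := by exact_mod_cast (by omega : (0:ℤ) < m)
  have hy0 : (0:ℝ) < (y:ℝ) := by exact_mod_cast (by omega : (0:ℤ) < y)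
  set α : ℝ := (m:ℝ) ^ ((1:ℝ)/n) with hαdef
  have hα : 0 < α := Real.rpow_pos_of_pos hm0 _
  have hαn : α ^ n = (m:ℝ) := by
    rw [hαdef, ← Real.rpow_natCast ((m:ℝ) ^ ((1:ℝ)/n)) n, ← Real.rpow_mul hm0.le]
    rw [one_div, inv_mul_cancel₀ (by positivity), Real.rpow_one]
  have hαn1 : α ^ (n-1) = (m:ℝ) ^ (((n:ℝ) - 1)/n) := by
    rw [hαdef, ← Real.rpow_natCast ((m:ℝ) ^ ((1:ℝ)/n)) (n-1), ← Real.rpow_mul hm0.le]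
    congr 1
    rw [Nat.cast_sub (by omega), Nat.cast_one]
    ring
  -- the complex root of unity
  set ζ : ℂ := Complex.exp (2 * Real.pi * Complex.I / n) with hζdef
  have hζ : IsPrimitiveRoot ζ n := Complex.isPrimitiveRoot_exp n hnne
  -- factorization
  have hfact : ((x:ℂ))^n - ((m:ℝ):ℂ) * ((y:ℂ))^n
      = ∏ j ∈ Finset.range n, ((x:ℂ) - ζ ^ j * ((α:ℂ) * (y:ℂ))) := by
    have e : ((α:ℂ) * (y:ℂ)) ^ n = ((m:ℝ):ℂ) * (y:ℂ)^n := by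
      rw [mul_pow]
      congr 1
      rw [← Complex.ofReal_pow, hαn]
    have := X_pow_sub_C_eq_prod hζ (by omega : 0 < n) e
    have h2 := congrArg (Polynomial.eval (x:ℂ)) this
    simpa [Polynomial.eval_prod] using h2
  -- |LHS| = 1
  have habs : ‖(x:ℂ)^n - ((m:ℝ):ℂ) * ((y:ℂ))^n‖ = 1 := by
    have : ((x:ℂ))^n - ((m:ℝ):ℂ) * ((y:ℂ))^n = ((x ^ n - m * y ^ n : ℤ) : ℂ) := by
      push_cast; ring
    rw [this]
    rcases h with h | h <;> rw [h] <;> simp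
  -- lower bound each factor for j ∈ Icc 1 (n-1)
  have hsin : ∀ j : ℕ, ‖(x:ℂ) - ζ ^ j * ((α:ℂ) * (y:ℂ))‖
      ≥ α * y * |Real.sin (2 * Real.pi * (j : ℝ) / n)| := by
    intro j
    have him : ((x:ℂ) - ζ ^ j * ((α:ℂ) * (y:ℂ))).im
        = -(α * y * Real.sin (2 * Real.pi * (j : ℝ) / n)) := by
      have hζj : ζ ^ j = Complex.exp (((2 * Real.pi * (j:ℝ) / n : ℝ) : ℂ) * Complex.I) := by
        rw [hζdef, ← Complex.exp_nat_mul]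
        congr 1
        push_cast
        ring
      rw [hζj]
      simp only [Complex.sub_im, Complex.mul_im, Complex.mul_re, Complex.ofReal_re,
        Complex.ofReal_im, Complex.intCast_im, Complex.intCast_re, Complex.exp_ofReal_mul_I_im,
        Complex.exp_ofReal_mul_I_re]
      ring
    calc α * y * |Real.sin (2 * Real.pi * (j : ℝ) / n)|
        = |((x:ℂ) - ζ ^ j * ((α:ℂ) * (y:ℂ))).im| := by
          rw [him, abs_neg, abs_mul]
          congr 1
          rw [abs_of_pos (by positivity)]
      _ ≤ ‖(x:ℂ) - ζ ^ j * ((α:ℂ) * (y:ℂ))‖ := Complex.abs_im_le_norm _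
  -- split the product
  have hIco : Finset.Ico 1 n = Finset.Icc 1 (n-1) := by
    ext a
    simp only [Finset.mem_Ico, Finset.mem_Icc]
    omega
  have hsplit : ∏ j ∈ Finset.range n, ‖(x:ℂ) - ζ ^ j * ((α:ℂ) * (y:ℂ))‖
      = ‖(x:ℂ) - (α:ℂ) * (y:ℂ)‖ *
        ∏ j ∈ Finset.Icc 1 (n-1), ‖(x:ℂ) - ζ ^ j * ((α:ℂ) * (y:ℂ))‖ := by
    rw [Finset.range_eq_Ico, Finset.prod_eq_prod_Ico_succ_bot (by omega : 0 < n), hIco,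
      pow_zero, one_mul]
  -- main inequality: 1 = A * P ≥ A * C
  set A : ℝ := ‖(x:ℂ) - (α:ℂ) * (y:ℂ)‖ with hA
  set c₂ : ℝ := ∏ j ∈ Finset.Icc 1 (n - 1), |Real.sin (2 * Real.pi * (j : ℝ) / n)| with hc2
  have hc2pos : 0 < c₂ := c2_pos n hn hodd
  have hP : ∏ j ∈ Finset.Icc 1 (n-1), ‖(x:ℂ) - ζ ^ j * ((α:ℂ) * (y:ℂ))‖
      ≥ (α * y) ^ (n-1) * c₂ := by
    have : (α * y) ^ (n-1) * c₂
        = ∏ j ∈ Finset.Icc 1 (n-1), (α * y * |Real.sin (2 * Real.pi * (j : ℝ) / n)|) := by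
      rw [Finset.prod_mul_distrib, Finset.prod_const, hc2]
      congr 2
      rw [Nat.card_Icc]
      omega
    rw [this]
    apply Finset.prod_le_prod
    · intro j _; positivity
    · intro j _; exact hsin j
  have hone : A * ∏ j ∈ Finset.Icc 1 (n-1), ‖(x:ℂ) - ζ ^ j * ((α:ℂ) * (y:ℂ))‖ = 1 := by
    rw [hA, ← hsplit, ← Complex.norm_prod, ← hfact]
    exact habs
  have hAC : A * ((α * y) ^ (n-1) * c₂) ≤ 1 := by
    calc A * ((α * y) ^ (n-1) * c₂)
        ≤ A * ∏ j ∈ Finset.Icc 1 (n-1), ‖(x:ℂ) - ζ ^ j * ((α:ℂ) * (y:ℂ))‖ := by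
          apply mul_le_mul_of_nonneg_left hP (norm_nonneg _)
      _ = 1 := hone
  have hAre : A = |(x:ℝ) - α * y| := by
    rw [hA]
    rw [show (x:ℂ) - (α:ℂ) * (y:ℂ) = (((x:ℝ) - α * y : ℝ):ℂ) by push_cast; ring]
    rw [Complex.norm_real, Real.norm_eq_abs]
  rw [← hαn1]
  have heq : α - (x:ℝ) / (y:ℝ) = (α * y - x) / y := by field_simp
  rw [heq, abs_div, abs_of_pos hy0, div_le_div_iff₀ hy0 (by positivity)]
  have hyn : (y:ℝ) ^ (n-1) * y = (y:ℝ) ^ n := by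
    rw [← pow_succ]
    congr 1
    omega
  calc |α * y - (x:ℝ)| * (α ^ (n-1) * c₂ * (y:ℝ) ^ n)
      = (A * ((α * y) ^ (n-1) * c₂)) * y := by
        rw [hAre, abs_sub_comm, mul_pow, ← hyn]; ring
    _ ≤ 1 * y := mul_le_mul_of_nonneg_right hAC hy0.le
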